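/- For fixed constants C > 0, A > 0, R > 0, the equation obtained from the stationarity condition of w ↦ C·(W − w) − A·(2^{R/w} − 1)·w (ignoring the constraint w ≤ W) has solution w = R·ln 2 / (W(e^{−1}·(C/A − 1)) + 1) whenever C/A > 1, where W denotes the Lambert W function (principal branch). -/

import Mathlib

/-- The stationarity condition of `w ↦ C·(Wtot − w) − A·(2^{R/w} − 1)·w` (ignoring
`w ≤ Wtot`) is solved by `w = R·ln 2 / (W(e⁻¹·(C/A − 1)) + 1)` when `C/A > 1`,
where `W` is the principal Lambert W function, i.e. `W(x)·e^{W(x)} = x`. -/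
theorem optimal_bandwidth_lambertW (C A R Wtot : ℝ) (hC : 0 < C) (hA : 0 < A) (hR : 0 < R)
    (hCA : 1 < C / A) (Wl : ℝ → ℝ)
    (hWl : Wl ((Real.exp 1)⁻¹ * (C / A - 1)) * Real.exp (Wl ((Real.exp 1)⁻¹ * (C / A - 1)))
      = (Real.exp 1)⁻¹ * (C / A - 1)) :
    deriv (fun w : ℝ => C * (Wtot - w) - A * (((2 : ℝ) ^ (R / w) - 1) * w))
      (R * Real.log 2 / (Wl ((Real.exp 1)⁻¹ * (C / A - 1)) + 1)) = 0 := by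
  set x : ℝ := (Real.exp 1)⁻¹ * (C / A - 1) with hx
  set L : ℝ := Wl x with hLdef
  have hxpos : 0 < x := mul_pos (inv_pos.mpr (Real.exp_pos 1)) (by linarith)
  have hLpos : 0 < L := by
    by_contra h
    push_neg at h
    nlinarith [Real.exp_pos L, hWl, mul_nonpos_of_nonpos_of_nonneg h (Real.exp_pos L).le]
  have hlog2 : 0 < Real.log 2 := Real.log_pos one_lt_two
  set K : ℝ := L + 1 with hKdef
  have hK : 0 < K := by linarith
  set w₀ : ℝ := R * Real.log 2 / K with hw0
  have hw0pos : 0 < w₀ := div_pos (mul_pos hR hlog2) hK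
  have hw0ne : w₀ ≠ 0 := ne_of_gt hw0pos
  have hRw : Real.log 2 * (R / w₀) = K := by
    rw [hw0]; field_simp
  have hfun : (fun w : ℝ => C * (Wtot - w) - A * (((2 : ℝ) ^ (R / w) - 1) * w))
      = fun w => C * (Wtot - w) - A * ((Real.exp (Real.log 2 * (R / w)) - 1) * w) := by
    funext w; rw [Real.rpow_def_of_pos two_pos]
  rw [hfun]
  have h1 : HasDerivAt (fun w : ℝ => R / w) (-(R / w₀ ^ 2)) w₀ := by
    simpa [div_eq_mul_inv] using (hasDerivAt_inv hw0ne).const_mul R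
  have h2 : HasDerivAt (fun w : ℝ => Real.exp (Real.log 2 * (R / w)))
      (Real.exp (Real.log 2 * (R / w₀)) * (Real.log 2 * (-(R / w₀ ^ 2)))) w₀ :=
    (h1.const_mul (Real.log 2)).exp
  have h3 := (h2.sub_const 1).mul (hasDerivAt_id w₀)
  have h4 := (((hasDerivAt_id w₀).const_sub Wtot).const_mul C).sub (h3.const_mul A)
  have h5 : HasDerivAt (fun w : ℝ => C * (Wtot - w) - A * ((Real.exp (Real.log 2 * (R / w)) - 1) * w))
      (C * -1 - A * (Real.exp (Real.log 2 * (R / w₀)) * (Real.log 2 * -(R / w₀ ^ 2)) * w₀ +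
        (Real.exp (Real.log 2 * (R / w₀)) - 1) * 1)) w₀ := by simpa [Pi.sub_def] using h4
  rw [h5.deriv]
  have hexpK : Real.exp (Real.log 2 * (R / w₀)) = Real.exp L * Real.exp 1 := by
    rw [hRw, hKdef, Real.exp_add]
  have hterm : Real.log 2 * (R / w₀ ^ 2) * w₀ = K := by
    rw [← hRw]; field_simp
  have hmain : A * (L * Real.exp L) * Real.exp 1 = C - A := by
    rw [hWl, hx]
    field_simp
  have hexp1 : (0:ℝ) < Real.exp 1 := Real.exp_pos 1
  rw [hexpK]
  nlinarith [hmain, hterm, Real.exp_pos L]
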